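/- Let (M, d_0, β) be a left Hom-Leibniz algebra with d_0 a 2-β-cochain, and let d_0, d_1, …, d_{k−1} be 2-β-cochains (k ≥ 2) such that Σ_{i=0}^{s} [d_i, d_{s−i}]_l = 0 for all 0 ≤ s ≤ k−1 (a deformation of order k−1). Set Ψ = Σ_{i=1}^{k−1} [d_i, d_{k−i}]_l. Then Ψ is a 3-cocycle, i.e. [d_0, Ψ]_l = 0, and the deformation extends to a deformation of order k — that is, there exists a 2-β-cochain d_k with Σ_{i=0}^{k} [d_i, d_{k−i}]_l = 0 — if and only if Ψ is a 3-coboundary, i.e. Ψ = [d_0, g]_l for some 2-β-cochain g. -/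

import Mathlib

open Finset

section NRPreamble

variable {M : Type*} [AddCommGroup M]

/-- The `(p,·)`-unshuffles: permutations strictly increasing on the first `p`
positions and on the remaining positions. -/
def IsUnshuffle {N : ℕ} (p : ℕ) (σ : Equiv.Perm (Fin N)) : Prop :=
  (∀ i j : Fin N, i < j → (j : ℕ) < p → σ i < σ j) ∧
  (∀ i j : Fin N, i < j → p ≤ (i : ℕ) → σ i < σ j)

instance {N p : ℕ} : DecidablePred (IsUnshuffle (N := N) p) := fun _ => by
  unfold IsUnshuffle; infer_instance

/-- Insertion position (0-indexed, i.e. `l(σ) - 1`) for the left circle product: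
the number of second-block values below the image of the last first-block position. -/
def insPosL {m n N : ℕ} (h : m + n = N + 1 ∧ 1 ≤ m ∧ 1 ≤ n) (σ : Equiv.Perm (Fin N)) :
    Fin m :=
  ⟨(univ.filter (fun s : Fin (m - 1) =>
      σ ⟨n + (s : ℕ), by omega⟩ < σ ⟨n - 1, by omega⟩)).card, by
    have hc := Finset.card_filter_le (univ : Finset (Fin (m - 1)))
      (fun s : Fin (m - 1) => σ ⟨n + (s : ℕ), by omega⟩ < σ ⟨n - 1, by omega⟩)
    simp only [Finset.card_univ, Fintype.card_fin] at hc
    omega⟩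

/-- Insertion position (0-indexed, i.e. `r(σ) - 1`) for the right circle product:
the number of second-block values below the image of the first position. -/
def insPosR {m n N : ℕ} (h : m + n = N + 1 ∧ 1 ≤ m ∧ 1 ≤ n) (σ : Equiv.Perm (Fin N)) :
    Fin m :=
  ⟨(univ.filter (fun s : Fin (m - 1) =>
      σ ⟨n + (s : ℕ), by omega⟩ < σ ⟨0, by omega⟩)).card, by
    have hc := Finset.card_filter_le (univ : Finset (Fin (m - 1)))
      (fun s : Fin (m - 1) => σ ⟨n + (s : ℕ), by omega⟩ < σ ⟨0, by omega⟩)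
    simp only [Finset.card_univ, Fintype.card_fin] at hc
    omega⟩

/-- The left circle product `f ∘ₗ g`, realized as an `N`-ary map (it vanishes by
convention unless `m + n = N + 1` with `m, n ≥ 1`). -/
noncomputable def circL (β : M → M) {m n : ℕ}
    (f : (Fin m → M) → M) (g : (Fin n → M) → M) (N : ℕ) : (Fin N → M) → M :=
  fun a =>
    if h : m + n = N + 1 ∧ 1 ≤ m ∧ 1 ≤ n then
      ∑ σ ∈ univ.filter (IsUnshuffle (N := N) n),
        (have hb : ((insPosL h σ : ℕ)) < m := (insPosL h σ).isLt
        ((-1 : ℤ) ^ ((insPosL h σ : ℕ)) * ((Equiv.Perm.sign σ : ℤˣ) : ℤ)) •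
          f (fun j : Fin m =>
            if hj : (j : ℕ) < ((insPosL h σ : ℕ)) then
              β^[n - 1] (a (σ ⟨n + (j : ℕ), by omega⟩))
            else if hj' : (j : ℕ) = ((insPosL h σ : ℕ)) then
              g (fun t : Fin n => a (σ ⟨(t : ℕ), by omega⟩))
            else
              β^[n - 1] (a (σ ⟨n + (j : ℕ) - 1, by omega⟩))))
    else 0

/-- The right circle product `f ∘ᵣ g`. -/
noncomputable def circR (β : M → M) {m n : ℕ}
    (f : (Fin m → M) → M) (g : (Fin n → M) → M) (N : ℕ) : (Fin N → M) → M :=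
  fun a =>
    if h : m + n = N + 1 ∧ 1 ≤ m ∧ 1 ≤ n then
      ∑ σ ∈ univ.filter (IsUnshuffle (N := N) n),
        (have hb : ((insPosR h σ : ℕ)) < m := (insPosR h σ).isLt
        ((-1 : ℤ) ^ ((insPosR h σ : ℕ)) * ((Equiv.Perm.sign σ : ℤˣ) : ℤ)) •
          f (fun j : Fin m =>
            if hj : (j : ℕ) < ((insPosR h σ : ℕ)) then
              β^[n - 1] (a (σ ⟨n + (j : ℕ), by omega⟩))
            else if hj' : (j : ℕ) = ((insPosR h σ : ℕ)) then
              g (fun t : Fin n => a (σ ⟨(t : ℕ), by omega⟩))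
            else
              β^[n - 1] (a (σ ⟨n + (j : ℕ) - 1, by omega⟩))))
    else 0

/-- The circle product for Hom-Lie algebras: `g` is always inserted in the first slot. -/
noncomputable def circLie (β : M → M) {m n : ℕ}
    (f : (Fin m → M) → M) (g : (Fin n → M) → M) (N : ℕ) : (Fin N → M) → M :=
  fun a =>
    if h : m + n = N + 1 ∧ 1 ≤ m ∧ 1 ≤ n then
      - ∑ σ ∈ univ.filter (IsUnshuffle (N := N) n),
          (((Equiv.Perm.sign σ : ℤˣ) : ℤ)) •
            f (fun j : Fin m =>
              if hj : (j : ℕ) = 0 then g (fun t : Fin n => a (σ ⟨(t : ℕ), by omega⟩))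
              else β^[n - 1] (a (σ ⟨n + (j : ℕ) - 1, by omega⟩)))
    else 0

/-- The left `β`-Nijenhuis–Richardson bracket. -/
noncomputable def bracketL (β : M → M) {m n : ℕ}
    (f : (Fin m → M) → M) (g : (Fin n → M) → M) (N : ℕ) : (Fin N → M) → M :=
  fun a => circL β f g N a - ((-1 : ℤ) ^ ((m - 1) * (n - 1))) • circL β g f N a

/-- The right `β`-Nijenhuis–Richardson bracket. -/
noncomputable def bracketR (β : M → M) {m n : ℕ}
    (f : (Fin m → M) → M) (g : (Fin n → M) → M) (N : ℕ) : (Fin N → M) → M :=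
  fun a => circR β f g N a - ((-1 : ℤ) ^ ((m - 1) * (n - 1))) • circR β g f N a

/-- The `β`-Nijenhuis–Richardson bracket for Hom-Lie algebras. -/
noncomputable def bracketLie (β : M → M) {m n : ℕ}
    (f : (Fin m → M) → M) (g : (Fin n → M) → M) (N : ℕ) : (Fin N → M) → M :=
  fun a => circLie β f g N a - ((-1 : ℤ) ^ ((m - 1) * (n - 1))) • circLie β g f N a

/-- `f` commutes with the twisting map `β` (the `k`-β-cochain condition). -/
def IsBetaCochain (β : M → M) {k : ℕ} (f : (Fin k → M) → M) : Prop :=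
  ∀ a : Fin k → M, β (f a) = f (fun i => β (a i))

/-- `f` is a `k`-`β`-cochain: a `k`-linear map commuting with `β`. -/
def IsCochain (K : Type*) [Field K] {M : Type*} [AddCommGroup M] [Module K M]
    (β : M → M) {k : ℕ} (f : (Fin k → M) → M) : Prop :=
  (∃ F : MultilinearMap K (fun _ : Fin k => M) M, ⇑F = f) ∧ IsBetaCochain β f

/-- View a binary map as a `2`-ary map. -/
def fn2 {A : Type*} (d : A → A → A) : (Fin 2 → A) → A := fun a => d (a 0) (a 1)

/-- Left Hom-Leibniz identity. -/
def IsLeftHomLeibniz {A : Type*} [AddCommGroup A] (β : A → A) (d : A → A → A) : Prop :=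
  ∀ x y z : A, d (β x) (d y z) = d (d x y) (β z) + d (β y) (d x z)

/-- Right Hom-Leibniz identity. -/
def IsRightHomLeibniz {A : Type*} [AddCommGroup A] (β : A → A) (d : A → A → A) : Prop :=
  ∀ x y z : A, d (β x) (d y z) = d (d x y) (β z) - d (d x z) (β y)

/-- Alternating `k`-ary map. -/
def IsAlt {k : ℕ} (f : (Fin k → M) → M) : Prop :=
  ∀ a : Fin k → M, ∀ i j : Fin k, i ≠ j → a i = a j → f a = 0

/-- Insert the value `x` in slot `i` of an `m`-tuple whose remaining entries are
given (in order) by `b`. -/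
def insSlot {m : ℕ} (i : Fin m) (x : M) (b : Fin (m - 1) → M) : Fin m → M :=
  fun p => if hp : (p : ℕ) < (i : ℕ) then b ⟨(p : ℕ), by omega⟩
    else if hpe : (p : ℕ) = (i : ℕ) then x
    else b ⟨(p : ℕ) - 1, by omega⟩

/-- The pair `(f, g)` is an `(m,n)`-`β`-cochain. -/
def IsPairCochain (K : Type*) [Field K] {M : Type*} [AddCommGroup M] [Module K M]
    (β : M → M) {m n : ℕ} (f : (Fin m → M) → M) (g : (Fin n → M) → M) : Prop :=
  IsCochain K β f ∧ IsCochain K β g ∧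
  ∀ i j : Fin m, i < j → ∀ (b : Fin (m - 1) → M) (c : Fin n → M),
    f (insSlot i (g c) b) = - f (insSlot j (g c) b)

end NRPreamble

section Aux
open Equiv


variable {K : Type*} [Field K] {M : Type*} [AddCommGroup M] [Module K M]

lemma circL3 (β : M → M) (f g : M →ₗ[K] M →ₗ[K] M) (a : Fin 3 → M) :
    circL β (fn2 (fun x y => f x y)) (fn2 (fun x y => g x y)) 3 a
      = f (g (a 0) (a 1)) (β (a 2)) + f (β (a 1)) (g (a 0) (a 2))
        - f (β (a 0)) (g (a 1) (a 2)) := by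
  have h : (2:ℕ) + 2 = 3 + 1 ∧ 1 ≤ 2 ∧ 1 ≤ 2 := by omega
  rw [circL, dif_pos h]
  rw [show (univ.filter (IsUnshuffle (N := 3) 2)) =
      {Equiv.refl (Fin 3), Equiv.swap 1 2, finRotate 3} from by decide]
  rw [Finset.sum_insert (by decide), Finset.sum_insert (by decide), Finset.sum_singleton]
  have h1 : (insPosL h (Equiv.refl (Fin 3)) : ℕ) = 0 := rfl
  have h2 : (insPosL h (Equiv.swap 1 2) : ℕ) = 1 := rfl
  have h3 : (insPosL h (finRotate 3) : ℕ) = 1 := rfl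
  have s2 : ((Equiv.Perm.sign (Equiv.swap (1 : Fin 3) 2) : ℤˣ) : ℤ) = -1 := by decide
  have s3 : ((Equiv.Perm.sign (finRotate 3) : ℤˣ) : ℤ) = 1 := by decide
  have e1 : ∀ (p : 2 < 3), (⟨2, p⟩ : Fin 3) = 2 := fun _ => rfl
  simp only [fn2, h1, h2, h3, s2, s3, Fin.val_zero, Fin.val_one, e1]
  norm_num [show Equiv.swap (1:Fin 3) 2 2 = 1 from by decide,
    show Equiv.swap (1:Fin 3) 2 0 = 0 from by decide,
    show (2:Fin 3) + 1 = 0 from by decide]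
  abel

lemma circL4L (β : M → M) (f : M →ₗ[K] M →ₗ[K] M) (T : (Fin 3 → M) → M) (a : Fin 4 → M) :
    circL β (fn2 (fun x y => f x y)) T 4 a
      = f (T ![a 0, a 1, a 2]) (β (β (a 3))) + f (β (β (a 2))) (T ![a 0, a 1, a 3])
        - f (β (β (a 1))) (T ![a 0, a 2, a 3]) + f (β (β (a 0))) (T ![a 1, a 2, a 3]) := by
  have h : (2:ℕ) + 3 = 4 + 1 ∧ 1 ≤ 2 ∧ 1 ≤ 3 := by omega
  rw [circL, dif_pos h]
  rw [show (univ.filter (IsUnshuffle (N := 4) 3)) =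
      {Equiv.refl (Fin 4), swap 2 3, swap 1 2 * swap 2 3, finRotate 4} from by decide]
  rw [Finset.sum_insert (by decide), Finset.sum_insert (by decide),
    Finset.sum_insert (by decide), Finset.sum_singleton]
  have h1 : (insPosL h (Equiv.refl (Fin 4)) : ℕ) = 0 := rfl
  have h2 : (insPosL h (swap 2 3) : ℕ) = 1 := rfl
  have h3 : (insPosL h (swap 1 2 * swap 2 3) : ℕ) = 1 := rfl
  have h4 : (insPosL h (finRotate 4) : ℕ) = 1 := rfl
  have s1 : ((Equiv.Perm.sign (Equiv.refl (Fin 4)) : ℤˣ) : ℤ) = 1 := by decide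
  have s2 : ((Equiv.Perm.sign (swap (2:Fin 4) 3) : ℤˣ) : ℤ) = -1 := by decide
  have s3 : ((Equiv.Perm.sign (swap (1:Fin 4) 2 * swap 2 3) : ℤˣ) : ℤ) = 1 := by decide
  have s4 : ((Equiv.Perm.sign (finRotate 4) : ℤˣ) : ℤ) = -1 := by decide
  have E1 : ∀ (p : ∀ t : Fin 3, (t:ℕ) < 4),
      (fun t : Fin 3 => a ⟨(t:ℕ), p t⟩) = ![a 0, a 1, a 2] := by
    intro p; funext t; fin_cases t <;> rfl
  have E2 : ∀ (p : ∀ t : Fin 3, (t:ℕ) < 4),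
      (fun t : Fin 3 => a ((swap (2:Fin 4) 3) ⟨(t:ℕ), p t⟩)) = ![a 0, a 1, a 3] := by
    intro p; funext t; fin_cases t <;> rfl
  have E3 : ∀ (p : ∀ t : Fin 3, (t:ℕ) < 4),
      (fun t : Fin 3 => a ((swap (1:Fin 4) 2) ((swap (2:Fin 4) 3) ⟨(t:ℕ), p t⟩)))
        = ![a 0, a 2, a 3] := by
    intro p; funext t; fin_cases t <;> rfl
  have E4 : ∀ (p : ∀ t : Fin 3, (t:ℕ) < 4),
      (fun t : Fin 3 => a (⟨(t:ℕ), p t⟩ + 1)) = ![a 1, a 2, a 3] := by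
    intro p; funext t; fin_cases t <;> rfl
  simp only [fn2, h1, h2, h3, h4, s1, s2, s3, s4, Fin.val_zero, Fin.val_one]
  norm_num [E1, E2, E3, E4]
  have e3 : ∀ (p : 3 < 4), (⟨3, p⟩ : Fin 4) = 3 := fun _ => rfl
  simp only [e3, show ((swap (2:Fin 4) 3) 3 : Fin 4) = 2 from by decide,
    show ((swap (1:Fin 4) 2) 2 : Fin 4) = 1 from by decide,
    show ((3:Fin 4) + 1) = 0 from by decide]
  abel

lemma circL4R (β : M → M) (T : (Fin 3 → M) → M) (f : M →ₗ[K] M →ₗ[K] M) (a : Fin 4 → M) :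
    circL β T (fn2 (fun x y => f x y)) 4 a
      = T ![f (a 0) (a 1), β (a 2), β (a 3)] + T ![β (a 1), f (a 0) (a 2), β (a 3)]
        + T ![β (a 1), β (a 2), f (a 0) (a 3)] - T ![β (a 0), f (a 1) (a 2), β (a 3)]
        - T ![β (a 0), β (a 2), f (a 1) (a 3)] + T ![β (a 0), β (a 1), f (a 2) (a 3)] := by
  have h : (3:ℕ) + 2 = 4 + 1 ∧ 1 ≤ 3 ∧ 1 ≤ 2 := by omega
  rw [circL, dif_pos h]
  rw [show (univ.filter (IsUnshuffle (N := 4) 2)) =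
      {Equiv.refl (Fin 4), swap 1 2, swap 1 3 * swap 2 3,
       swap 0 1 * swap 1 2, swap 0 1 * swap 1 3 * swap 2 3, swap 0 2 * swap 1 3} from by
        decide]
  rw [Finset.sum_insert (by decide), Finset.sum_insert (by decide),
    Finset.sum_insert (by decide), Finset.sum_insert (by decide),
    Finset.sum_insert (by decide), Finset.sum_singleton]
  have F : ∀ (σ : Equiv.Perm (Fin 4)) (v : Fin 3 → M),
      (∀ j : Fin 3, (if hj : (j : ℕ) < ((insPosL h σ : ℕ)) then β^[2 - 1] (a (σ ⟨2 + (j : ℕ), by omega⟩))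
        else if hj' : (j : ℕ) = ((insPosL h σ : ℕ)) then
          fn2 (fun x y => f x y) (fun t : Fin 2 => a (σ ⟨(t : ℕ), by omega⟩))
        else β^[2 - 1] (a (σ ⟨2 + (j : ℕ) - 1, by omega⟩))) = v j) →
      (fun j : Fin 3 =>
        if hj : (j : ℕ) < ((insPosL h σ : ℕ)) then β^[2 - 1] (a (σ ⟨2 + (j : ℕ), by omega⟩))
        else if hj' : (j : ℕ) = ((insPosL h σ : ℕ)) then
          fn2 (fun x y => f x y) (fun t : Fin 2 => a (σ ⟨(t : ℕ), by omega⟩))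
        else β^[2 - 1] (a (σ ⟨2 + (j : ℕ) - 1, by omega⟩))) = v := by
    intro σ v hv; funext j; exact hv j
  simp only [F (Equiv.refl (Fin 4)) ![f (a 0) (a 1), β (a 2), β (a 3)] (by intro j; fin_cases j <;> rfl),
    F (Equiv.swap 1 2) ![β (a 1), f (a 0) (a 2), β (a 3)] (by intro j; fin_cases j <;> rfl),
    F (Equiv.swap 1 3 * Equiv.swap 2 3) ![β (a 1), β (a 2), f (a 0) (a 3)] (by intro j; fin_cases j <;> rfl),
    F (Equiv.swap 0 1 * Equiv.swap 1 2) ![β (a 0), f (a 1) (a 2), β (a 3)] (by intro j; fin_cases j <;> rfl),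
    F (Equiv.swap 0 1 * Equiv.swap 1 3 * Equiv.swap 2 3) ![β (a 0), β (a 2), f (a 1) (a 3)] (by intro j; fin_cases j <;> rfl),
    F (Equiv.swap 0 2 * Equiv.swap 1 3) ![β (a 0), β (a 1), f (a 2) (a 3)] (by intro j; fin_cases j <;> rfl)]
  have p1 : (insPosL h (Equiv.refl (Fin 4)) : ℕ) = 0 := rfl
  have p2 : (insPosL h (Equiv.swap 1 2) : ℕ) = 1 := rfl
  have p3 : (insPosL h (Equiv.swap 1 3 * Equiv.swap 2 3) : ℕ) = 2 := rfl
  have p4 : (insPosL h (Equiv.swap 0 1 * Equiv.swap 1 2) : ℕ) = 1 := rfl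
  have p5 : (insPosL h (Equiv.swap 0 1 * Equiv.swap 1 3 * Equiv.swap 2 3) : ℕ) = 2 := rfl
  have p6 : (insPosL h (Equiv.swap 0 2 * Equiv.swap 1 3) : ℕ) = 2 := rfl
  have s1 : ((Equiv.Perm.sign (Equiv.refl (Fin 4)) : ℤˣ) : ℤ) = 1 := by decide
  have s2 : ((Equiv.Perm.sign (Equiv.swap (1:Fin 4) 2) : ℤˣ) : ℤ) = -1 := by decide
  have s3 : ((Equiv.Perm.sign (Equiv.swap (1:Fin 4) 3 * Equiv.swap 2 3) : ℤˣ) : ℤ) = 1 := by decide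
  have s4 : ((Equiv.Perm.sign (Equiv.swap (0:Fin 4) 1 * Equiv.swap 1 2) : ℤˣ) : ℤ) = 1 := by decide
  have s5 : ((Equiv.Perm.sign (Equiv.swap (0:Fin 4) 1 * Equiv.swap 1 3 * Equiv.swap 2 3) : ℤˣ) : ℤ) = -1 := by decide
  have s6 : ((Equiv.Perm.sign (Equiv.swap (0:Fin 4) 2 * Equiv.swap 1 3) : ℤˣ) : ℤ) = 1 := by decide
  simp only [p1, p2, p3, p4, p5, p6, s1, s2, s3, s4, s5, s6]
  norm_num
  abel
/-- The 3-map `f ∘ g` for binary `f, g`. -/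
def cp (β : M → M) (f g : M →ₗ[K] M →ₗ[K] M) : M → M → M → M := fun x y z =>
  f (g x y) (β z) + f (β y) (g x z) - f (β x) (g y z)

/-- The 4-map `f ∘ T` for binary `f` and ternary `T`. -/
def cL4 (β : M → M) (f : M →ₗ[K] M →ₗ[K] M) (T : M → M → M → M) : M → M → M → M → M :=
  fun a b c d => f (T a b c) (β (β d)) + f (β (β c)) (T a b d)
    - f (β (β b)) (T a c d) + f (β (β a)) (T b c d)

/-- The 4-map `T ∘ f` for ternary `T` and binary `f`. -/
def cR4 (β : M → M) (T : M → M → M → M) (f : M →ₗ[K] M →ₗ[K] M) : M → M → M → M → M :=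
  fun a b c d => T (f a b) (β c) (β d) + T (β b) (f a c) (β d)
    + T (β b) (β c) (f a d) - T (β a) (f b c) (β d)
    - T (β a) (β c) (f b d) + T (β a) (β b) (f c d)

lemma assocA (β : M → M) (f g h : M →ₗ[K] M →ₗ[K] M)
    (hf : ∀ x y, β (f x y) = f (β x) (β y))
    (hg : ∀ x y, β (g x y) = g (β x) (β y))
    (hh : ∀ x y, β (h x y) = h (β x) (β y))
    (a b c d : M) :
    cR4 β (cp β f g) h a b c d + cR4 β (cp β f h) g a b c d
      = cL4 β f (cp β g h) a b c d + cL4 β f (cp β h g) a b c d := by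
  simp only [cL4, cR4, cp, map_add, map_sub, LinearMap.add_apply, LinearMap.sub_apply,
    hf, hg, hh]
  abel
lemma cL4_sum (β : M → M) (f : M →ₗ[K] M →ₗ[K] M) {ι : Type*} (s : Finset ι)
    (T : ι → (M → M → M → M)) (a b c d : M) :
    cL4 β f (fun x y z => ∑ i ∈ s, T i x y z) a b c d
      = ∑ i ∈ s, cL4 β f (T i) a b c d := by
  simp only [cL4, map_sum, LinearMap.sum_apply]
  rw [← Finset.sum_add_distrib, ← Finset.sum_sub_distrib, ← Finset.sum_add_distrib]

lemma cR4_sum (β : M → M) (f : M →ₗ[K] M →ₗ[K] M) {ι : Type*} (s : Finset ι)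
    (T : ι → (M → M → M → M)) (a b c d : M) :
    cR4 β (fun x y z => ∑ i ∈ s, T i x y z) f a b c d
      = ∑ i ∈ s, cR4 β (T i) f a b c d := by
  simp only [cR4]
  rw [← Finset.sum_add_distrib, ← Finset.sum_add_distrib, ← Finset.sum_sub_distrib,
    ← Finset.sum_sub_distrib, ← Finset.sum_add_distrib]

lemma cL4_add (β : M → M) (f : M →ₗ[K] M →ₗ[K] M) (T₁ T₂ : M → M → M → M) (a b c d : M) :
    cL4 β f (fun x y z => T₁ x y z + T₂ x y z) a b c d
      = cL4 β f T₁ a b c d + cL4 β f T₂ a b c d := by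
  simp only [cL4, map_add, LinearMap.add_apply]; abel

lemma cR4_add (β : M → M) (f : M →ₗ[K] M →ₗ[K] M) (T₁ T₂ : M → M → M → M) (a b c d : M) :
    cR4 β (fun x y z => T₁ x y z + T₂ x y z) f a b c d
      = cR4 β T₁ f a b c d + cR4 β T₂ f a b c d := by
  simp only [cR4]; abel

lemma cL4_neg (β : M → M) (f : M →ₗ[K] M →ₗ[K] M) (T : M → M → M → M) (a b c d : M) :
    cL4 β f (fun x y z => -T x y z) a b c d = -cL4 β f T a b c d := by
  simp only [cL4, map_neg, LinearMap.neg_apply]; abel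

lemma cR4_neg (β : M → M) (f : M →ₗ[K] M →ₗ[K] M) (T : M → M → M → M) (a b c d : M) :
    cR4 β (fun x y z => -T x y z) f a b c d = -cR4 β T f a b c d := by
  simp only [cR4]; abel

lemma bracketL3v (β : M → M) (f g : M →ₗ[K] M →ₗ[K] M) (a : Fin 3 → M) :
    bracketL β (fn2 (fun x y => f x y)) (fn2 (fun x y => g x y)) 3 a
      = cp β f g (a 0) (a 1) (a 2) + cp β g f (a 0) (a 1) (a 2) := by
  simp only [bracketL, circL3, cp]
  norm_num
  abel

lemma bracketL3' (β : M → M) (f g : M →ₗ[K] M →ₗ[K] M) (x y z : M) :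
    bracketL β (fn2 (fun x y => f x y)) (fn2 (fun x y => g x y)) 3 ![x, y, z]
      = cp β f g x y z + cp β g f x y z := by
  rw [bracketL3v]; rfl

lemma bracket4_eq (β : M → M) (f : M →ₗ[K] M →ₗ[K] M) (T : (Fin 3 → M) → M)
    (a : Fin 4 → M) :
    bracketL β (fn2 (fun x y => f x y)) T 4 a
      = cL4 β f (fun x y z => T ![x, y, z]) (a 0) (a 1) (a 2) (a 3)
        - cR4 β (fun x y z => T ![x, y, z]) f (a 0) (a 1) (a 2) (a 3) := by
  have h4 : (fun x y z => T ![x,y,z]) (a 0) (a 1) (a 2) = T ![a 0, a 1, a 2] := rfl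
  simp only [bracketL, circL4L, circL4R, cL4, cR4]
  norm_num

lemma cp_smul_right (β : M → M) (f g : M →ₗ[K] M →ₗ[K] M) (c : K) (x y z : M) :
    cp β f (c • g) x y z = c • cp β f g x y z := by
  simp [cp, map_smul, LinearMap.smul_apply, smul_sub, smul_add]

lemma cp_smul_left (β : M → M) (f g : M →ₗ[K] M →ₗ[K] M) (c : K) (x y z : M) :
    cp β (c • g) f x y z = c • cp β g f x y z := by
  simp [cp, map_smul, LinearMap.smul_apply, smul_sub, smul_add]

lemma cp_zero_right (β : M → M) (f : M →ₗ[K] M →ₗ[K] M) (x y z : M) :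
    cp β f (0 : M →ₗ[K] M →ₗ[K] M) x y z = 0 := by simp [cp]

lemma cp_zero_left (β : M → M) (f : M →ₗ[K] M →ₗ[K] M) (x y z : M) :
    cp β (0 : M →ₗ[K] M →ₗ[K] M) f x y z = 0 := by simp [cp]

/-- Reflection reindexing on `Ico 1 k`. -/
lemma sum_reflect {N : Type*} [AddCommGroup N] (k : ℕ) (F : ℕ → ℕ → N) :
    ∑ i ∈ Finset.Ico 1 k, F i (k - i) = ∑ i ∈ Finset.Ico 1 k, F (k - i) i := by
  refine Finset.sum_nbij' (fun i => k - i) (fun i => k - i) ?_ ?_ ?_ ?_ ?_ <;>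
    intro a ha <;> simp only [Finset.mem_Ico] at * <;> try omega
  have h1 : k - (k - a) = a := by omega
  rw [h1]

/-- Reflection reindexing on `range (s+1)`. -/
lemma sum_reflect' {N : Type*} [AddCommGroup N] (s : ℕ) (F : ℕ → ℕ → N) :
    ∑ i ∈ Finset.range (s + 1), F i (s - i) = ∑ i ∈ Finset.range (s + 1), F (s - i) i := by
  refine Finset.sum_nbij' (fun i => s - i) (fun i => s - i) ?_ ?_ ?_ ?_ ?_ <;>
    intro a ha <;> simp only [Finset.mem_range] at * <;> try omega
  have h1 : s - (s - a) = a := by omega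
  rw [h1]

end Aux

/-- for a deformation of order `k-1` of a left Hom-Leibniz algebra, the
obstruction `Ψ = Σ_{i=1}^{k-1} [dᵢ, d_{k-i}]_l` is a 3-cocycle, and the deformation
extends to order `k` if and only if `Ψ` is a 3-coboundary. -/
theorem statement_13 {K : Type*} [Field K] {M : Type*} [AddCommGroup M] [Module K M]
    (β : M →ₗ[K] M) (ds : ℕ → (M →ₗ[K] M →ₗ[K] M)) {k : ℕ} (hk : 2 ≤ k)
    (hcoch : ∀ i < k, IsBetaCochain (⇑β) (fn2 (fun x y => ds i x y)))
    (hLeib : IsLeftHomLeibniz (⇑β) (fun x y => ds 0 x y))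
    (hdef : ∀ s < k, ∑ i ∈ Finset.range (s + 1),
      bracketL (⇑β) (fn2 (fun x y => ds i x y)) (fn2 (fun x y => ds (s - i) x y)) 3
        = 0) :
    (bracketL (⇑β) (fn2 (fun x y => ds 0 x y))
        (∑ i ∈ Finset.Ico 1 k,
          bracketL (⇑β) (fn2 (fun x y => ds i x y))
            (fn2 (fun x y => ds (k - i) x y)) 3) 4 = 0) ∧
    ((∃ dk : M →ₗ[K] M →ₗ[K] M, IsBetaCochain (⇑β) (fn2 (fun x y => dk x y)) ∧
        ∑ i ∈ Finset.range (k + 1),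
          bracketL (⇑β) (fn2 (fun x y => Function.update ds k dk i x y))
            (fn2 (fun x y => Function.update ds k dk (k - i) x y)) 3 = 0) ↔
      (∃ g : M →ₗ[K] M →ₗ[K] M, IsBetaCochain (⇑β) (fn2 (fun x y => g x y)) ∧
        ∑ i ∈ Finset.Ico 1 k,
          bracketL (⇑β) (fn2 (fun x y => ds i x y))
            (fn2 (fun x y => ds (k - i) x y)) 3
          = bracketL (⇑β) (fn2 (fun x y => ds 0 x y)) (fn2 (fun x y => g x y)) 3)) := by
  -- pointwise cochain facts
  have hco : ∀ i, i < k → ∀ x y : M, β (ds i x y) = ds i (β x) (β y) := by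
    intro i hi x y
    have h := hcoch i hi ![x, y]
    simpa [fn2, Matrix.cons_val_zero, Matrix.cons_val_one, Matrix.head_cons] using h
  -- Ψ evaluated on triples is twice the `cp` sum
  have psi2 : ∀ x y z : M,
      (∑ i ∈ Finset.Ico 1 k,
        bracketL (⇑β) (fn2 (fun x y => ds i x y)) (fn2 (fun x y => ds (k - i) x y)) 3) ![x, y, z]
        = (∑ i ∈ Finset.Ico 1 k, cp (⇑β) (ds i) (ds (k - i)) x y z)
          + (∑ i ∈ Finset.Ico 1 k, cp (⇑β) (ds i) (ds (k - i)) x y z) := by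
    intro x y z
    rw [Finset.sum_apply]
    simp only [bracketL3']
    rw [Finset.sum_add_distrib]
    congr 1
    exact (sum_reflect k (fun u v => cp (⇑β) (ds u) (ds v) x y z)).symm
  -- halving in characteristic ≠ 2
  have half : (2:K) ≠ 0 → ∀ x y : M, x + x = y + y → x = y := by
    intro h2 x y hxy
    have h : (2:K) • x = (2:K) • y := by rw [two_smul, two_smul]; exact hxy
    exact smul_right_injective M h2 h
  have lemABCD : ∀ A B C D : M, A + B = C + D → B - D = -(A - C) := by
    intro A B C D h
    have h' : A + B - (C + D) = 0 := by rw [h]; exact sub_self _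
    calc B - D = (A + B - (C + D)) - (A - C) := by abel
      _ = -(A - C) := by rw [h', zero_sub]
  -- the deformation equations at the `cp` level (characteristic ≠ 2)
  have hC : (2:K) ≠ 0 → ∀ s, s < k → ∀ x y z : M,
      ∑ i ∈ Finset.range (s + 1), cp (⇑β) (ds i) (ds (s - i)) x y z = 0 := by
    intro h2 s hs x y z
    have h0 := congrFun (hdef s hs) ![x, y, z]
    rw [Finset.sum_apply] at h0
    simp only [bracketL3', Pi.zero_apply] at h0
    rw [Finset.sum_add_distrib] at h0
    rw [← sum_reflect' s (fun u v => cp (⇑β) (ds u) (ds v) x y z)] at h0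
    refine half h2 _ 0 ?_
    rw [add_zero]
    exact h0
  -- pairing identity from the deformation equations
  have hpair : (2:K) ≠ 0 → ∀ s, 1 ≤ s → s < k → ∀ x y z : M,
      cp (⇑β) (ds 0) (ds s) x y z + cp (⇑β) (ds s) (ds 0) x y z
        = -∑ p ∈ Finset.Ico 1 s, cp (⇑β) (ds p) (ds (s - p)) x y z := by
    intro h2 s h1s hsk x y z
    have h0 := hC h2 s hsk x y z
    have hsplit : Finset.range (s + 1) = insert 0 (insert s (Finset.Ico 1 s)) := by
      ext t
      simp only [Finset.mem_range, Finset.mem_insert, Finset.mem_Ico]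
      omega
    rw [hsplit, Finset.sum_insert (by simp only [Finset.mem_insert, Finset.mem_Ico]; omega),
      Finset.sum_insert (by simp only [Finset.mem_Ico]; omega)] at h0
    have e1 : s - 0 = s := by omega
    have e2 : s - s = 0 := by omega
    rw [e1, e2] at h0
    have hcong : ∀ p ∈ Finset.Ico 1 s, True := fun _ _ => trivial
    refine eq_neg_of_add_eq_zero_left ?_
    calc cp (⇑β) (ds 0) (ds s) x y z + cp (⇑β) (ds s) (ds 0) x y z
          + ∑ p ∈ Finset.Ico 1 s, cp (⇑β) (ds p) (ds (s - p)) x y z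
        = cp (⇑β) (ds 0) (ds s) x y z + (cp (⇑β) (ds s) (ds 0) x y z
          + ∑ p ∈ Finset.Ico 1 s, cp (⇑β) (ds p) (ds (s - p)) x y z) := by abel
      _ = 0 := h0
  -- the heart of the cocycle identity (characteristic ≠ 2)
  have key1 : (2:K) ≠ 0 → ∀ x y z w : M,
      ∑ i ∈ Finset.Ico 1 k, cL4 (⇑β) (ds 0) (cp (⇑β) (ds i) (ds (k - i))) x y z w
        = ∑ i ∈ Finset.Ico 1 k, cR4 (⇑β) (cp (⇑β) (ds i) (ds (k - i))) (ds 0) x y z w := by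
    intro h2 x y z w
    have hk0 : 0 < k := by omega
    -- associator identity summed, with f = ds 0
    have sumA : ∑ i ∈ Finset.Ico 1 k, cR4 (⇑β) (cp (⇑β) (ds 0) (ds i)) (ds (k - i)) x y z w
          + ∑ i ∈ Finset.Ico 1 k, cR4 (⇑β) (cp (⇑β) (ds 0) (ds (k - i))) (ds i) x y z w
        = ∑ i ∈ Finset.Ico 1 k, cL4 (⇑β) (ds 0) (cp (⇑β) (ds i) (ds (k - i))) x y z w
          + ∑ i ∈ Finset.Ico 1 k, cL4 (⇑β) (ds 0) (cp (⇑β) (ds (k - i)) (ds i)) x y z w := by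
      rw [← Finset.sum_add_distrib, ← Finset.sum_add_distrib]
      refine Finset.sum_congr rfl ?_
      intro i hi
      simp only [Finset.mem_Ico] at hi
      exact assocA (⇑β) (ds 0) (ds i) (ds (k - i)) (hco 0 hk0) (hco i (by omega))
        (hco (k - i) (by omega)) x y z w
    rw [← sum_reflect k (fun u v => cR4 (⇑β) (cp (⇑β) (ds 0) (ds u)) (ds v) x y z w)] at sumA
    rw [← sum_reflect k (fun u v => cL4 (⇑β) (ds 0) (cp (⇑β) (ds u) (ds v)) x y z w)] at sumA
    have E1 : ∑ i ∈ Finset.Ico 1 k, cL4 (⇑β) (ds 0) (cp (⇑β) (ds i) (ds (k - i))) x y z w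
        = ∑ i ∈ Finset.Ico 1 k, cR4 (⇑β) (cp (⇑β) (ds 0) (ds i)) (ds (k - i)) x y z w :=
      (half h2 _ _ sumA).symm
    -- associator identity summed, with h = ds 0
    have sumB : ∑ i ∈ Finset.Ico 1 k, cR4 (⇑β) (cp (⇑β) (ds i) (ds (k - i))) (ds 0) x y z w
          + ∑ i ∈ Finset.Ico 1 k, cR4 (⇑β) (cp (⇑β) (ds i) (ds 0)) (ds (k - i)) x y z w
        = ∑ i ∈ Finset.Ico 1 k, cL4 (⇑β) (ds i) (cp (⇑β) (ds (k - i)) (ds 0)) x y z w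
          + ∑ i ∈ Finset.Ico 1 k, cL4 (⇑β) (ds i) (cp (⇑β) (ds 0) (ds (k - i))) x y z w := by
      rw [← Finset.sum_add_distrib, ← Finset.sum_add_distrib]
      refine Finset.sum_congr rfl ?_
      intro i hi
      simp only [Finset.mem_Ico] at hi
      exact assocA (⇑β) (ds i) (ds (k - i)) (ds 0) (hco i (by omega)) (hco (k - i) (by omega))
        (hco 0 hk0) x y z w
    -- combine via the pairing identity
    have comb1 : ∑ i ∈ Finset.Ico 1 k, cR4 (⇑β) (cp (⇑β) (ds 0) (ds i)) (ds (k - i)) x y z w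
          + ∑ i ∈ Finset.Ico 1 k, cR4 (⇑β) (cp (⇑β) (ds i) (ds 0)) (ds (k - i)) x y z w
        = -∑ i ∈ Finset.Ico 1 k, ∑ p ∈ Finset.Ico 1 i,
            cR4 (⇑β) (cp (⇑β) (ds p) (ds (i - p))) (ds (k - i)) x y z w := by
      rw [← Finset.sum_add_distrib, ← Finset.sum_neg_distrib]
      refine Finset.sum_congr rfl ?_
      intro i hi
      simp only [Finset.mem_Ico] at hi
      have e : (fun u v t => cp (⇑β) (ds 0) (ds i) u v t + cp (⇑β) (ds i) (ds 0) u v t)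
          = fun u v t => -∑ p ∈ Finset.Ico 1 i, cp (⇑β) (ds p) (ds (i - p)) u v t := by
        funext u v t
        exact hpair h2 i hi.1 hi.2 u v t
      calc cR4 (⇑β) (cp (⇑β) (ds 0) (ds i)) (ds (k - i)) x y z w
            + cR4 (⇑β) (cp (⇑β) (ds i) (ds 0)) (ds (k - i)) x y z w
          = cR4 (⇑β) (fun u v t => cp (⇑β) (ds 0) (ds i) u v t + cp (⇑β) (ds i) (ds 0) u v t)
              (ds (k - i)) x y z w := (cR4_add _ _ _ _ _ _ _ _).symm
        _ = cR4 (⇑β) (fun u v t => -∑ p ∈ Finset.Ico 1 i, cp (⇑β) (ds p) (ds (i - p)) u v t)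
              (ds (k - i)) x y z w := by rw [e]
        _ = -cR4 (⇑β) (fun u v t => ∑ p ∈ Finset.Ico 1 i, cp (⇑β) (ds p) (ds (i - p)) u v t)
              (ds (k - i)) x y z w := cR4_neg _ _ _ _ _ _ _
        _ = -∑ p ∈ Finset.Ico 1 i, cR4 (⇑β) (cp (⇑β) (ds p) (ds (i - p))) (ds (k - i)) x y z w := by
              rw [cR4_sum]
    have comb2 : ∑ i ∈ Finset.Ico 1 k, cL4 (⇑β) (ds i) (cp (⇑β) (ds (k - i)) (ds 0)) x y z w
          + ∑ i ∈ Finset.Ico 1 k, cL4 (⇑β) (ds i) (cp (⇑β) (ds 0) (ds (k - i))) x y z w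
        = -∑ i ∈ Finset.Ico 1 k, ∑ q ∈ Finset.Ico 1 (k - i),
            cL4 (⇑β) (ds i) (cp (⇑β) (ds q) (ds (k - i - q))) x y z w := by
      rw [← Finset.sum_add_distrib, ← Finset.sum_neg_distrib]
      refine Finset.sum_congr rfl ?_
      intro i hi
      simp only [Finset.mem_Ico] at hi
      have e : (fun u v t => cp (⇑β) (ds (k - i)) (ds 0) u v t + cp (⇑β) (ds 0) (ds (k - i)) u v t)
          = fun u v t => -∑ q ∈ Finset.Ico 1 (k - i), cp (⇑β) (ds q) (ds (k - i - q)) u v t := by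
        funext u v t
        rw [add_comm]
        exact hpair h2 (k - i) (by omega) (by omega) u v t
      calc cL4 (⇑β) (ds i) (cp (⇑β) (ds (k - i)) (ds 0)) x y z w
            + cL4 (⇑β) (ds i) (cp (⇑β) (ds 0) (ds (k - i))) x y z w
          = cL4 (⇑β) (ds i) (fun u v t => cp (⇑β) (ds (k - i)) (ds 0) u v t
              + cp (⇑β) (ds 0) (ds (k - i)) u v t) x y z w := (cL4_add _ _ _ _ _ _ _ _).symm
        _ = cL4 (⇑β) (ds i) (fun u v t => -∑ q ∈ Finset.Ico 1 (k - i),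
              cp (⇑β) (ds q) (ds (k - i - q)) u v t) x y z w := by rw [e]
        _ = -cL4 (⇑β) (ds i) (fun u v t => ∑ q ∈ Finset.Ico 1 (k - i),
              cp (⇑β) (ds q) (ds (k - i - q)) u v t) x y z w := cL4_neg _ _ _ _ _ _ _
        _ = -∑ q ∈ Finset.Ico 1 (k - i), cL4 (⇑β) (ds i) (cp (⇑β) (ds q) (ds (k - i - q))) x y z w := by
              rw [cL4_sum]
    -- the symmetric double sum identity
    have DD : ∑ i ∈ Finset.Ico 1 k, ∑ p ∈ Finset.Ico 1 i,
          cR4 (⇑β) (cp (⇑β) (ds p) (ds (i - p))) (ds (k - i)) x y z w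
        = ∑ i ∈ Finset.Ico 1 k, ∑ q ∈ Finset.Ico 1 (k - i),
          cL4 (⇑β) (ds i) (cp (⇑β) (ds q) (ds (k - i - q))) x y z w := by
      rw [Finset.sum_sigma' (Finset.Ico 1 k) (fun i => Finset.Ico 1 i)
        (fun i p => cR4 (⇑β) (cp (⇑β) (ds p) (ds (i - p))) (ds (k - i)) x y z w)]
      rw [Finset.sum_sigma' (Finset.Ico 1 k) (fun i => Finset.Ico 1 (k - i))
        (fun i q => cL4 (⇑β) (ds i) (cp (⇑β) (ds q) (ds (k - i - q))) x y z w)]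
      -- reindex the left sum to the common index set
      have step1 : ∑ u ∈ (Finset.Ico 1 k).sigma (fun i => Finset.Ico 1 i),
            cR4 (⇑β) (cp (⇑β) (ds u.2) (ds (u.1 - u.2))) (ds (k - u.1)) x y z w
          = ∑ u ∈ (Finset.Ico 1 k).sigma (fun i => Finset.Ico 1 (k - i)),
            cR4 (⇑β) (cp (⇑β) (ds u.1) (ds u.2)) (ds (k - u.1 - u.2)) x y z w := by
        refine Finset.sum_nbij' (fun u => ⟨u.2, u.1 - u.2⟩) (fun u => ⟨u.1 + u.2, u.1⟩)
          ?_ ?_ ?_ ?_ ?_ <;> intro u hu <;>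
          simp only [Finset.mem_sigma, Finset.mem_Ico] at * <;>
          try (constructor <;> omega)
        · ext <;> simp <;> omega
        · ext <;> simp <;> omega
        · have e1 : k - u.2 - (u.1 - u.2) = k - u.1 := by omega
          rw [e1]
      rw [step1]
      -- involution pairing
      set Q := (Finset.Ico 1 k).sigma (fun i => Finset.Ico 1 (k - i)) with hQ
      set G : (Σ _ : ℕ, ℕ) → M := fun u =>
        cR4 (⇑β) (cp (⇑β) (ds u.1) (ds u.2)) (ds (k - u.1 - u.2)) x y z w with hG
      set H : (Σ _ : ℕ, ℕ) → M := fun u =>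
        cL4 (⇑β) (ds u.1) (cp (⇑β) (ds u.2) (ds (k - u.1 - u.2))) x y z w with hH
      have hrev : ∑ u ∈ Q, (G u - H u) = ∑ u ∈ Q, (G ⟨u.1, k - u.1 - u.2⟩ - H ⟨u.1, k - u.1 - u.2⟩) := by
        refine Finset.sum_nbij' (fun u => (⟨u.1, k - u.1 - u.2⟩ : Σ _ : ℕ, ℕ))
          (fun u => ⟨u.1, k - u.1 - u.2⟩) ?_ ?_ ?_ ?_ ?_ <;> intro u hu <;>
          simp only [hQ, Finset.mem_sigma, Finset.mem_Ico] at * <;>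
          try (constructor <;> omega)
        · ext <;> simp <;> omega
        · ext <;> simp <;> omega
        · have e1 : k - u.1 - (k - u.1 - u.2) = u.2 := by omega
          rw [e1]
      have hneg : ∀ u ∈ Q, G ⟨u.1, k - u.1 - u.2⟩ - H ⟨u.1, k - u.1 - u.2⟩ = -(G u - H u) := by
        intro u hu
        simp only [hQ, Finset.mem_sigma, Finset.mem_Ico] at hu
        simp only [hG, hH]
        have e1 : k - u.1 - (k - u.1 - u.2) = u.2 := by omega
        rw [e1]
        have ha := assocA (⇑β) (ds u.1) (ds u.2) (ds (k - u.1 - u.2)) (hco u.1 (by omega))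
          (hco u.2 (by omega)) (hco (k - u.1 - u.2) (by omega)) x y z w
        exact lemABCD _ _ _ _ ha
      have hX : ∑ u ∈ Q, (G u - H u) = 0 := by
        have h1 : ∑ u ∈ Q, (G u - H u) = -∑ u ∈ Q, (G u - H u) :=
          calc ∑ u ∈ Q, (G u - H u)
              = ∑ u ∈ Q, (G ⟨u.fst, k - u.fst - u.snd⟩ - H ⟨u.fst, k - u.fst - u.snd⟩) := hrev
            _ = ∑ u ∈ Q, -(G u - H u) := Finset.sum_congr rfl hneg
            _ = -∑ u ∈ Q, (G u - H u) := Finset.sum_neg_distrib _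
        refine half h2 _ 0 ?_
        rw [add_zero]
        nth_rewrite 2 [h1]
        exact add_neg_cancel _
      rw [Finset.sum_sub_distrib] at hX
      exact sub_eq_zero.mp hX
    -- assemble
    have hR := eq_sub_of_add_eq sumB
    rw [comb2] at hR
    have hL := eq_sub_of_add_eq comb1
    rw [E1, hL, hR, DD]
  -- twice-kill in characteristic 2
  have hchar2 : (2:K) = 0 → ∀ m : M, m + m = 0 := by
    intro h2 m
    have h := two_smul K m
    rw [h2, zero_smul] at h
    exact h.symm
  constructor
  · -- Part 1 : the obstruction is a cocycle
    funext a
    rw [bracket4_eq]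
    have hfun : (fun x y z => (∑ i ∈ Finset.Ico 1 k,
          bracketL (⇑β) (fn2 (fun x y => ds i x y)) (fn2 (fun x y => ds (k - i) x y)) 3) ![x, y, z])
        = fun x y z => (∑ i ∈ Finset.Ico 1 k, cp (⇑β) (ds i) (ds (k - i)) x y z)
          + (∑ i ∈ Finset.Ico 1 k, cp (⇑β) (ds i) (ds (k - i)) x y z) := by
      funext x y z
      exact psi2 x y z
    rw [hfun, cL4_add, cR4_add]
    simp only [cL4_sum, cR4_sum, Pi.zero_apply]
    by_cases h2 : (2:K) = 0
    · rw [hchar2 h2, hchar2 h2, sub_self]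
    · rw [key1 h2, sub_self]
  · -- Part 2 : extendability iff coboundary
    have supd : ∀ dk : M →ₗ[K] M →ₗ[K] M,
        (∑ i ∈ Finset.range (k + 1),
          bracketL (⇑β) (fn2 (fun x y => Function.update ds k dk i x y))
            (fn2 (fun x y => Function.update ds k dk (k - i) x y)) 3)
          = bracketL (⇑β) (fn2 (fun x y => ds 0 x y)) (fn2 (fun x y => dk x y)) 3
            + bracketL (⇑β) (fn2 (fun x y => dk x y)) (fn2 (fun x y => ds 0 x y)) 3
            + ∑ i ∈ Finset.Ico 1 k,
                bracketL (⇑β) (fn2 (fun x y => ds i x y)) (fn2 (fun x y => ds (k - i) x y)) 3 := by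
      intro dk
      have hsplit : Finset.range (k + 1) = insert 0 (insert k (Finset.Ico 1 k)) := by
        ext t
        simp only [Finset.mem_range, Finset.mem_insert, Finset.mem_Ico]
        omega
      rw [hsplit, Finset.sum_insert (by simp only [Finset.mem_insert, Finset.mem_Ico]; omega),
        Finset.sum_insert (by simp only [Finset.mem_Ico]; omega)]
      have h0 : Function.update ds k dk 0 = ds 0 := Function.update_of_ne (by omega) _ _
      have hkk : Function.update ds k dk k = dk := Function.update_self _ _ _
      have e0 : k - 0 = k := by omega
      have ek : k - k = 0 := by omega
      have hmid : ∑ i ∈ Finset.Ico 1 k,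
            bracketL (⇑β) (fn2 (fun x y => Function.update ds k dk i x y))
              (fn2 (fun x y => Function.update ds k dk (k - i) x y)) 3
          = ∑ i ∈ Finset.Ico 1 k,
            bracketL (⇑β) (fn2 (fun x y => ds i x y)) (fn2 (fun x y => ds (k - i) x y)) 3 := by
        refine Finset.sum_congr rfl ?_
        intro i hi
        simp only [Finset.mem_Ico] at hi
        rw [Function.update_of_ne (by omega : i ≠ k), Function.update_of_ne (by omega : k - i ≠ k)]
      rw [e0, ek, h0, hkk, hmid]
      abel
    constructor
    · rintro ⟨dk, hdkc, hdke⟩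
      have hdk2 : ∀ x y : M, β (dk x y) = dk (β x) (β y) := fun x y => by
        simpa [fn2, Matrix.cons_val_zero, Matrix.cons_val_one, Matrix.head_cons] using hdkc ![x, y]
      refine ⟨(-2 : K) • dk, ?_, ?_⟩
      · intro a
        simp only [fn2, LinearMap.smul_apply, map_smul, hdk2]
      · rw [supd dk] at hdke
        funext a
        have hE := congrFun hdke a
        simp only [Pi.add_apply, Pi.zero_apply, bracketL3v] at hE
        rw [bracketL3v, cp_smul_right, cp_smul_left]
        have h3 := eq_neg_of_add_eq_zero_right hE
        rw [h3]
        have key : ∀ P Q : M, -((P + Q) + (Q + P)) = (-2:K) • P + (-2:K) • Q := by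
          intro P Q
          have hP : (-2:K) • P = -(P + P) := by rw [neg_smul, two_smul]
          have hQ : (-2:K) • Q = -(Q + Q) := by rw [neg_smul, two_smul]
          rw [hP, hQ]
          abel
        exact key _ _
    · rintro ⟨g, hgc, hge⟩
      have hg2 : ∀ x y : M, β (g x y) = g (β x) (β y) := fun x y => by
        simpa [fn2, Matrix.cons_val_zero, Matrix.cons_val_one, Matrix.head_cons] using hgc ![x, y]
      by_cases h2 : (2:K) = 0
      · refine ⟨0, ?_, ?_⟩
        · intro a
          simp [fn2]
        · rw [supd 0]
          funext a
          have hv : a = ![a 0, a 1, a 2] := by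
            funext t
            fin_cases t <;> rfl
          simp only [Pi.add_apply, Pi.zero_apply, bracketL3v]
          rw [cp_zero_right, cp_zero_left]
          rw [hv, psi2]
          rw [hchar2 h2 (∑ i ∈ Finset.Ico 1 k,
            cp (⇑β) (ds i) (ds (k - i)) (a 0) (a 1) (a 2))]
          simp
      · refine ⟨(-(2:K)⁻¹) • g, ?_, ?_⟩
        · intro a
          simp only [fn2, LinearMap.smul_apply, map_smul, hg2]
        · rw [supd _]
          funext a
          have hge' := congrFun hge a
          simp only [Pi.add_apply, Pi.zero_apply, bracketL3v] at hge' ⊢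
          rw [cp_smul_right, cp_smul_left, hge']
          have h21 : ((2:K)⁻¹ + (2:K)⁻¹) = 1 := by
            rw [← two_mul, mul_inv_cancel₀ h2]
          have key : ∀ P : M, (-(2:K)⁻¹) • P + (-(2:K)⁻¹) • P + P = 0 := by
            intro P
            rw [← add_smul, show (-(2:K)⁻¹ + -(2:K)⁻¹) = -1 by rw [← neg_add, h21], neg_one_smul]
            exact neg_add_cancel P
          calc (-(2:K)⁻¹) • cp (⇑β) (ds 0) g (a 0) (a 1) (a 2)
                + (-(2:K)⁻¹) • cp (⇑β) g (ds 0) (a 0) (a 1) (a 2)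
                + ((-(2:K)⁻¹) • cp (⇑β) g (ds 0) (a 0) (a 1) (a 2)
                  + (-(2:K)⁻¹) • cp (⇑β) (ds 0) g (a 0) (a 1) (a 2))
                + (cp (⇑β) (ds 0) g (a 0) (a 1) (a 2) + cp (⇑β) g (ds 0) (a 0) (a 1) (a 2))
              = ((-(2:K)⁻¹) • cp (⇑β) (ds 0) g (a 0) (a 1) (a 2)
                + (-(2:K)⁻¹) • cp (⇑β) (ds 0) g (a 0) (a 1) (a 2)
                + cp (⇑β) (ds 0) g (a 0) (a 1) (a 2))
                + ((-(2:K)⁻¹) • cp (⇑β) g (ds 0) (a 0) (a 1) (a 2)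
                + (-(2:K)⁻¹) • cp (⇑β) g (ds 0) (a 0) (a 1) (a 2)
                + cp (⇑β) g (ds 0) (a 0) (a 1) (a 2)) := by abel
            _ = 0 := by rw [key, key, add_zero]
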